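/- Fix integers n ≥ 1 and 1 ≤ k ≤ n. Let w_S : ℂ∖{0} → ℝ, indexed by the k-element subsets S of ℤ/(n+1)ℤ, be twice continuously differentiable functions satisfying equation (Gr), condition (I), and condition (II') with a family v_{i,j} : ℂ∖{0} → ℝ. Define w_i = ½ v_{i,−1−i} for i ∈ ℤ/(n+1)ℤ. Then w_i + w_{−1−i} = 0 for all i, and the w_i satisfy the tt*-Toda equation: for every i ∈ ℤ/(n+1)ℤ and every z ∈ ℂ∖{0}, ¼ Δw_i(z) = exp(w_i(z) − w_{i−1}(z)) − exp(w_{i+1}(z) − w_i(z)), where i±1 are taken in ℤ/(n+1)ℤ and Δ is the Euclidean Laplacian on ℂ ≅ ℝ². -/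

import Mathlib

open scoped BigOperators

/-- The Euclidean Laplacian `Δf = ∂²f/∂x² + ∂²f/∂y²` of `f : ℂ → ℝ`. -/
noncomputable def laplacianR (f : ℂ → ℝ) (z : ℂ) : ℝ :=
  fderiv ℝ (fun w => fderiv ℝ f w 1) z 1
    + fderiv ℝ (fun w => fderiv ℝ f w Complex.I) z Complex.I

/-- `w_i = ½ v_{i,−1−i}`. -/
noncomputable def todaComponent (n : ℕ) (v : ZMod (n + 1) → ZMod (n + 1) → ℂ → ℝ)
    (i : ZMod (n + 1)) (z : ℂ) : ℝ :=
  v i (-1 - i) z / 2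

open Filter Topology

lemma lap_congr {f g : ℂ → ℝ} {z : ℂ} (h : f =ᶠ[𝓝 z] g) :
    laplacianR f z = laplacianR g z := by
  have key : ∀ c : ℂ, (fun w => fderiv ℝ f w c) =ᶠ[𝓝 z] (fun w => fderiv ℝ g w c) := by
    intro c
    filter_upwards [h.eventuallyEq_nhds] with w hw
    rw [hw.fderiv_eq]
  unfold laplacianR
  rw [(key 1).fderiv_eq, (key Complex.I).fderiv_eq]

lemma deriv_dat {f : ℂ → ℝ} {z : ℂ} (hf : ContDiffAt ℝ 2 f z) (c : ℂ) :
    DifferentiableAt ℝ (fun w => fderiv ℝ f w c) z := by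
  have h1 : ContDiffAt ℝ 1 (fderiv ℝ f) z := hf.fderiv_right (by norm_num)
  exact (h1.differentiableAt (by norm_num)).clm_apply (differentiableAt_const c)

lemma lap_add {f g : ℂ → ℝ} {z : ℂ} (hf : ContDiffAt ℝ 2 f z) (hg : ContDiffAt ℝ 2 g z) :
    laplacianR (fun w => f w + g w) z = laplacianR f z + laplacianR g z := by
  have hfe : ∀ᶠ w in 𝓝 z, ContDiffAt ℝ 2 f w := hf.eventually (by simp)
  have hge : ∀ᶠ w in 𝓝 z, ContDiffAt ℝ 2 g w := hg.eventually (by simp)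
  have key : ∀ c : ℂ, fderiv ℝ (fun w => fderiv ℝ (fun y => f y + g y) w c) z c
      = fderiv ℝ (fun w => fderiv ℝ f w c) z c + fderiv ℝ (fun w => fderiv ℝ g w c) z c := by
    intro c
    have h1 : (fun w => fderiv ℝ (fun y => f y + g y) w c)
        =ᶠ[𝓝 z] (fun w => fderiv ℝ f w c + fderiv ℝ g w c) := by
      filter_upwards [hfe, hge] with w hfw hgw
      rw [fderiv_fun_add (hfw.differentiableAt (by norm_num)) (hgw.differentiableAt (by norm_num))]
      rfl
    rw [h1.fderiv_eq, fderiv_fun_add (deriv_dat hf c) (deriv_dat hg c)]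
    rfl
  unfold laplacianR
  rw [key 1, key Complex.I]; ring

lemma lap_neg {f : ℂ → ℝ} {z : ℂ} :
    laplacianR (fun w => -f w) z = -laplacianR f z := by
  have key : ∀ c : ℂ, fderiv ℝ (fun w => fderiv ℝ (fun y => -f y) w c) z c
      = -fderiv ℝ (fun w => fderiv ℝ f w c) z c := by
    intro c
    have h1 : (fun w => fderiv ℝ (fun y => -f y) w c) = (fun w => -(fderiv ℝ f w c)) := by
      funext w; rw [fderiv_fun_neg]; rfl
    rw [h1, fderiv_fun_neg]
    rfl
  unfold laplacianR
  rw [key 1, key Complex.I]; ring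

lemma lap_sub {f g : ℂ → ℝ} {z : ℂ} (hf : ContDiffAt ℝ 2 f z) (hg : ContDiffAt ℝ 2 g z) :
    laplacianR (fun w => f w - g w) z = laplacianR f z - laplacianR g z := by
  have : (fun w => f w - g w) = (fun w => f w + -g w) := by funext w; ring
  rw [this, lap_add hf hg.neg]
  have : laplacianR (fun w => -g w) z = -laplacianR g z := lap_neg
  rw [this]; ring

lemma lap_const_mul {f : ℂ → ℝ} {z : ℂ} (b : ℝ) (hf : ContDiffAt ℝ 2 f z) :
    laplacianR (fun w => b * f w) z = b * laplacianR f z := by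
  have hfe : ∀ᶠ w in 𝓝 z, ContDiffAt ℝ 2 f w := hf.eventually (by simp)
  have key : ∀ c : ℂ, fderiv ℝ (fun w => fderiv ℝ (fun y => b * f y) w c) z c
      = b * fderiv ℝ (fun w => fderiv ℝ f w c) z c := by
    intro c
    have h1 : (fun w => fderiv ℝ (fun y => b * f y) w c)
        =ᶠ[𝓝 z] (fun w => b * (fderiv ℝ f w c)) := by
      filter_upwards [hfe] with w hfw
      rw [fderiv_const_mul (hfw.differentiableAt (by norm_num)) b]
      rfl
    rw [h1.fderiv_eq, fderiv_const_mul (deriv_dat hf c) b]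
    rfl
  unfold laplacianR
  rw [key 1, key Complex.I]; ring

lemma lap_zero {z : ℂ} : laplacianR (fun _ => (0:ℝ)) z = 0 := by
  unfold laplacianR
  simp

lemma lap_sum {z : ℂ} (m : ℕ) (F : ℕ → ℂ → ℝ) (hF : ∀ t, t < m → ContDiffAt ℝ 2 (F t) z) :
    laplacianR (fun w => ∑ t ∈ Finset.range m, F t w) z
      = ∑ t ∈ Finset.range m, laplacianR (F t) z := by
  induction m with
  | zero => simpa using lap_zero
  | succ m ih =>
      have hsm : ContDiffAt ℝ 2 (fun w => ∑ t ∈ Finset.range m, F t w) z := by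
        apply ContDiffAt.sum
        intro t ht
        exact hF t (by simp at ht; omega)
      have : (fun w => ∑ t ∈ Finset.range (m+1), F t w)
          = (fun w => (∑ t ∈ Finset.range m, F t w) + F m w) := by
        funext w; rw [Finset.sum_range_succ]
      rw [this, lap_add hsm (hF m (by omega)), ih (fun t ht => hF t (by omega)),
        Finset.sum_range_succ]


def itv (n k : ℕ) (a : ZMod (n+1)) : Finset (ZMod (n+1)) :=
  (Finset.range k).image (fun m : ℕ => a + (m : ZMod (n+1)))

def Jset (n k : ℕ) (a : ZMod (n+1)) : Finset (ZMod (n+1)) :=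
  insert (a + (k : ℕ)) ((itv n k a).erase (a + ((k-1 : ℕ) : ZMod (n+1))))

lemma zcast_inj (n : ℕ) {m m' : ℕ} (hm : m < n+1) (hm' : m' < n+1)
    (h : (m : ZMod (n+1)) = (m' : ZMod (n+1))) : m = m' := by
  rw [← ZMod.val_cast_of_lt hm, ← ZMod.val_cast_of_lt hm', h]

lemma mem_itv (n k : ℕ) (a x : ZMod (n+1)) :
    x ∈ itv n k a ↔ ∃ m, m < k ∧ x = a + (m : ZMod (n+1)) := by
  simp [itv, Finset.mem_image, Finset.mem_range, eq_comm]

lemma itv_card (n k : ℕ) (hk : k ≤ n+1) (a : ZMod (n+1)) : (itv n k a).card = k := by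
  rw [itv, Finset.card_image_of_injOn, Finset.card_range]
  intro m hm m' hm' h
  simp only [Finset.coe_range, Set.mem_Iio] at hm hm'
  exact zcast_inj n (by omega) (by omega) (add_left_cancel h)

lemma add_cast_inj (n : ℕ) {a : ZMod (n+1)} {m m' : ℕ} (hm : m < n+1) (hm' : m' < n+1)
    (h : a + (m : ZMod (n+1)) = a + (m' : ZMod (n+1))) : m = m' :=
  zcast_inj n hm hm' (add_left_cancel h)

lemma sub_one_eq_add (n : ℕ) {a : ZMod (n+1)} {m : ℕ} (hm : 1 ≤ m) :
    a + (m : ZMod (n+1)) - 1 = a + ((m-1 : ℕ) : ZMod (n+1)) := by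
  have : ((m - 1 : ℕ) : ZMod (n+1)) = (m : ZMod (n+1)) - 1 := by
    have := Nat.cast_sub (R := ZMod (n+1)) hm
    simpa using this
  rw [this]; ring

lemma a_sub_one_not_mem (n k : ℕ) (hk2 : k ≤ n) (a : ZMod (n+1)) :
    a - 1 ∉ itv n k a := by
  rw [mem_itv]
  rintro ⟨m, hm, he⟩
  have h0 : ((m+1 : ℕ) : ZMod (n+1)) = ((0:ℕ) : ZMod (n+1)) := by
    push_cast
    linear_combination a - he - 1 - (m : ZMod (n+1))
  have := zcast_inj n (by omega) (by omega) h0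
  omega

lemma a_add_k_not_mem (n k : ℕ) (hk2 : k ≤ n) (a : ZMod (n+1)) :
    a + (k : ℕ) ∉ itv n k a := by
  rw [mem_itv]
  rintro ⟨m, hm, he⟩
  have := add_cast_inj n (by omega) (by omega) he
  omega

lemma a_mem_itv (n k : ℕ) (hk1 : 1 ≤ k) (a : ZMod (n+1)) : a ∈ itv n k a := by
  rw [mem_itv]; exact ⟨0, by omega, by simp⟩

lemma top_mem_itv (n k : ℕ) (hk1 : 1 ≤ k) (a : ZMod (n+1)) :
    a + ((k-1 : ℕ) : ZMod (n+1)) ∈ itv n k a := by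
  rw [mem_itv]; exact ⟨k-1, by omega, rfl⟩

lemma filter_left (n k : ℕ) (hk1 : 1 ≤ k) (hk2 : k ≤ n) (a : ZMod (n+1)) :
    (itv n k a).filter (fun i => i - 1 ∉ itv n k a) = {a} := by
  ext x
  simp only [Finset.mem_filter, Finset.mem_singleton]
  constructor
  · rintro ⟨hx, hnx⟩
    rw [mem_itv] at hx
    obtain ⟨m, hm, rfl⟩ := hx
    rcases Nat.eq_zero_or_pos m with h0 | h1
    · subst h0; simp
    · exfalso
      apply hnx
      rw [sub_one_eq_add n h1, mem_itv]
      exact ⟨m-1, by omega, rfl⟩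
  · rintro rfl
    exact ⟨a_mem_itv n k hk1 _, a_sub_one_not_mem n k hk2 _⟩

lemma top_add_one (n k : ℕ) (hk1 : 1 ≤ k) (a : ZMod (n+1)) :
    a + ((k-1 : ℕ) : ZMod (n+1)) + 1 = a + (k : ℕ) := by
  have : ((k - 1 : ℕ) : ZMod (n+1)) = (k : ZMod (n+1)) - 1 := by
    have := Nat.cast_sub (R := ZMod (n+1)) hk1
    simpa using this
  rw [this]; ring

lemma filter_right (n k : ℕ) (hk1 : 1 ≤ k) (hk2 : k ≤ n) (a : ZMod (n+1)) :
    (itv n k a).filter (fun i => i + 1 ∉ itv n k a) = {a + ((k-1 : ℕ) : ZMod (n+1))} := by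
  ext x
  simp only [Finset.mem_filter, Finset.mem_singleton]
  constructor
  · rintro ⟨hx, hnx⟩
    rw [mem_itv] at hx
    obtain ⟨m, hm, rfl⟩ := hx
    rcases Nat.lt_or_ge m (k-1) with h1 | h1
    · exfalso
      apply hnx
      rw [mem_itv]
      refine ⟨m+1, by omega, by push_cast; ring⟩
    · have : m = k - 1 := by omega
      subst this; rfl
  · rintro rfl
    refine ⟨top_mem_itv n k hk1 _, ?_⟩
    rw [top_add_one n k hk1 _]
    exact a_add_k_not_mem n k hk2 _


lemma mem_Jset (n k : ℕ) (hk1 : 1 ≤ k) (hk2 : k ≤ n) (a x : ZMod (n+1)) :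
    x ∈ Jset n k a ↔ x = a + (k : ℕ) ∨ ∃ m, m < k - 1 ∧ x = a + (m : ZMod (n+1)) := by
  simp only [Jset, Finset.mem_insert, Finset.mem_erase, mem_itv]
  constructor
  · rintro (h | ⟨hne, m, hm, rfl⟩)
    · exact Or.inl h
    · refine Or.inr ⟨m, ?_, rfl⟩
      rcases Nat.lt_or_ge m (k-1) with h1 | h1
      · exact h1
      · exfalso; apply hne; congr 1; congr 1; omega
  · rintro (h | ⟨m, hm, rfl⟩)
    · exact Or.inl h
    · refine Or.inr ⟨?_, m, by omega, rfl⟩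
      intro he
      have := add_cast_inj n (by omega) (by omega) he
      omega

lemma Jset_card (n k : ℕ) (hk1 : 1 ≤ k) (hk2 : k ≤ n) (a : ZMod (n+1)) :
    (Jset n k a).card = k := by
  rw [Jset, Finset.card_insert_of_notMem, Finset.card_erase_of_mem (top_mem_itv n k hk1 a),
    itv_card n k (by omega) a]
  · omega
  · intro h
    exact a_add_k_not_mem n k hk2 a (Finset.mem_of_mem_erase h)

lemma a_mem_Jset (n k : ℕ) (hk1 : 2 ≤ k) (hk2 : k ≤ n) (a : ZMod (n+1)) :
    a ∈ Jset n k a := by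
  rw [mem_Jset n k (by omega) hk2]
  exact Or.inr ⟨0, by omega, by simp⟩

lemma top_mem_Jset (n k : ℕ) (hk1 : 1 ≤ k) (hk2 : k ≤ n) (a : ZMod (n+1)) :
    a + (k : ℕ) ∈ Jset n k a := by
  rw [mem_Jset n k hk1 hk2]; exact Or.inl rfl

lemma k2_mem_Jset (n k : ℕ) (hk1 : 2 ≤ k) (hk2 : k ≤ n) (a : ZMod (n+1)) :
    a + ((k-2 : ℕ) : ZMod (n+1)) ∈ Jset n k a := by
  rw [mem_Jset n k (by omega) hk2]
  exact Or.inr ⟨k-2, by omega, rfl⟩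

lemma asub1_not_mem_Jset (n k : ℕ) (hk1 : 1 ≤ k) (hk2 : k + 1 ≤ n) (a : ZMod (n+1)) :
    a - 1 ∉ Jset n k a := by
  rw [mem_Jset n k hk1 (by omega)]
  rintro (h | ⟨m, hm, h⟩)
  · have h0 : ((k+1 : ℕ) : ZMod (n+1)) = ((0:ℕ) : ZMod (n+1)) := by
      push_cast
      linear_combination a - h
    have := zcast_inj n (by omega) (by omega) h0
    omega
  · have h0 : ((m+1 : ℕ) : ZMod (n+1)) = ((0:ℕ) : ZMod (n+1)) := by
      push_cast
      linear_combination a - h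
    have := zcast_inj n (by omega) (by omega) h0
    omega

lemma b_not_mem_Jset (n k : ℕ) (hk1 : 1 ≤ k) (hk2 : k ≤ n) (a : ZMod (n+1)) :
    a + ((k-1 : ℕ) : ZMod (n+1)) ∉ Jset n k a := by
  rw [mem_Jset n k hk1 hk2]
  rintro (h | ⟨m, hm, h⟩)
  · have := add_cast_inj n (m := k-1) (by omega) (by omega) h
    omega
  · have := add_cast_inj n (m := k-1) (by omega) (by omega) h
    omega

lemma k1_not_mem_Jset (n k : ℕ) (hk1 : 1 ≤ k) (hk2 : k + 1 ≤ n) (a : ZMod (n+1)) :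
    a + ((k+1 : ℕ) : ZMod (n+1)) ∉ Jset n k a := by
  rw [mem_Jset n k hk1 (by omega)]
  rintro (h | ⟨m, hm, h⟩)
  · have := add_cast_inj n (m := k+1) (by omega) (by omega) h
    omega
  · have := add_cast_inj n (m := k+1) (by omega) (by omega) h
    omega

lemma filterJ_left (n k : ℕ) (hk1 : 2 ≤ k) (hk2 : k + 1 ≤ n) (a : ZMod (n+1)) :
    (Jset n k a).filter (fun i => i - 1 ∉ Jset n k a) = {a, a + (k : ℕ)} := by
  ext x
  simp only [Finset.mem_filter, Finset.mem_insert, Finset.mem_singleton]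
  constructor
  · rintro ⟨hx, hnx⟩
    rw [mem_Jset n k (by omega) (by omega)] at hx
    rcases hx with h | ⟨m, hm, rfl⟩
    · exact Or.inr h
    · rcases Nat.eq_zero_or_pos m with h0 | h1
      · subst h0; left; simp
      · exfalso
        apply hnx
        rw [sub_one_eq_add n h1, mem_Jset n k (by omega) (by omega)]
        exact Or.inr ⟨m-1, by omega, rfl⟩
  · rintro (rfl | rfl)
    · exact ⟨a_mem_Jset n k hk1 (by omega) _, asub1_not_mem_Jset n k (by omega) hk2 _⟩
    · refine ⟨top_mem_Jset n k (by omega) (by omega) _, ?_⟩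
      rw [sub_one_eq_add n (by omega : 1 ≤ k)]
      exact b_not_mem_Jset n k (by omega) (by omega) _

lemma filterJ_right (n k : ℕ) (hk1 : 2 ≤ k) (hk2 : k + 1 ≤ n) (a : ZMod (n+1)) :
    (Jset n k a).filter (fun i => i + 1 ∉ Jset n k a)
      = {a + ((k-2 : ℕ) : ZMod (n+1)), a + (k : ℕ)} := by
  ext x
  simp only [Finset.mem_filter, Finset.mem_insert, Finset.mem_singleton]
  constructor
  · rintro ⟨hx, hnx⟩
    rw [mem_Jset n k (by omega) (by omega)] at hx
    rcases hx with h | ⟨m, hm, rfl⟩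
    · exact Or.inr h
    · rcases Nat.lt_or_ge m (k-2) with h1 | h1
      · exfalso
        apply hnx
        rw [mem_Jset n k (by omega) (by omega)]
        refine Or.inr ⟨m+1, by omega, by push_cast; ring⟩
      · left; congr 1; congr 1; omega
  · rintro (rfl | rfl)
    · refine ⟨k2_mem_Jset n k hk1 (by omega) _, ?_⟩
      have he : a + ((k-2 : ℕ) : ZMod (n+1)) + 1 = a + ((k-1 : ℕ) : ZMod (n+1)) := by
        have h3 : k - 1 = (k-2) + 1 := by omega
        rw [h3]; push_cast; ring
      rw [he]
      exact b_not_mem_Jset n k (by omega) (by omega) _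
    · refine ⟨top_mem_Jset n k (by omega) (by omega) _, ?_⟩
      have he : a + (k : ℕ) + 1 = a + ((k+1 : ℕ) : ZMod (n+1)) := by push_cast; ring
      rw [he]
      exact k1_not_mem_Jset n k (by omega) hk2 _

lemma Jset_k1 (n : ℕ) (a : ZMod (n+1)) : Jset n 1 a = itv n 1 (a+1) := by
  have h1 : itv n 1 a = {a} := by
    ext x; rw [mem_itv]
    simp only [Finset.mem_singleton]
    constructor
    · rintro ⟨m, hm, rfl⟩
      interval_cases m
      simp
    · rintro rfl; exact ⟨0, by omega, by simp⟩
  have h2 : itv n 1 (a+1) = {a+1} := by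
    ext x; rw [mem_itv]
    simp only [Finset.mem_singleton]
    constructor
    · rintro ⟨m, hm, rfl⟩
      interval_cases m
      simp
    · rintro rfl; exact ⟨0, by omega, by simp⟩
  rw [Jset, h1, h2]
  norm_num

lemma Jset_kn (n : ℕ) (hn : 1 ≤ n) (a : ZMod (n+1)) :
    Jset n n a = Finset.univ.erase (a + ((n-1 : ℕ) : ZMod (n+1))) := by
  apply Finset.eq_of_subset_of_card_le
  · intro x hx
    rw [mem_Jset n n hn le_rfl] at hx
    rw [Finset.mem_erase]
    refine ⟨?_, Finset.mem_univ x⟩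
    rcases hx with rfl | ⟨m, hm, rfl⟩
    · intro h
      have := add_cast_inj n (m := n) (by omega) (by omega) h
      omega
    · intro h
      have := add_cast_inj n (by omega) (by omega) h
      omega
  · rw [Finset.card_erase_of_mem (Finset.mem_univ _), Finset.card_univ, ZMod.card,
      Jset_card n n hn le_rfl]
    omega

lemma one_ne_zero_zmod (n : ℕ) (hn : 1 ≤ n) : (1 : ZMod (n+1)) ≠ 0 := by
  intro h
  have h0 : ((1 : ℕ) : ZMod (n+1)) = ((0:ℕ) : ZMod (n+1)) := by push_cast; exact h
  have := zcast_inj n (by omega) (by omega) h0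
  omega

lemma filterU_left (n : ℕ) (hn : 1 ≤ n) (b : ZMod (n+1)) :
    (Finset.univ.erase b).filter (fun i : ZMod (n+1) => i - 1 ∉ Finset.univ.erase b)
      = {b + 1} := by
  ext x
  simp only [Finset.mem_filter, Finset.mem_erase, Finset.mem_univ, and_true, not_and, not_not,
    Finset.mem_singleton]
  constructor
  · rintro ⟨hxb, hx⟩
    linear_combination hx
  · rintro rfl
    constructor
    · intro h
      exact one_ne_zero_zmod n hn (by linear_combination h)
    · ring
  

lemma filterU_right (n : ℕ) (hn : 1 ≤ n) (b : ZMod (n+1)) :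
    (Finset.univ.erase b).filter (fun i : ZMod (n+1) => i + 1 ∉ Finset.univ.erase b)
      = {b - 1} := by
  ext x
  simp only [Finset.mem_filter, Finset.mem_erase, Finset.mem_univ, and_true, not_and, not_not,
    Finset.mem_singleton]
  constructor
  · rintro ⟨hxb, hx⟩
    linear_combination hx
  · rintro rfl
    constructor
    · intro h
      exact one_ne_zero_zmod n hn (by linear_combination -h)
    · ring

set_option maxHeartbeats 1000000 in
/-- **Proposition 4.2 of the paper.**  If `w_S : ℂ∖{0} → ℝ`, indexed by `k`-element
subsets of `ℤ/(n+1)ℤ`, are `C²` and satisfy equation (Gr), condition (I), and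
condition (II') with family `v_{i,j}`, then the functions `w_i = ½ v_{i,−1−i}`
satisfy `w_i + w_{−1−i} = 0` and the tt*-Toda equation. -/
theorem toda_from_Gr (n k : ℕ) (hn : 1 ≤ n) (hk1 : 1 ≤ k) (hk2 : k ≤ n)
    (w : Finset (ZMod (n + 1)) → ℂ → ℝ)
    (v : ZMod (n + 1) → ZMod (n + 1) → ℂ → ℝ)
    (hsm : ∀ S : Finset (ZMod (n + 1)), S.card = k →
        ContDiffOn ℝ 2 (w S) {(0 : ℂ)}ᶜ)
    (hGr : ∀ S : Finset (ZMod (n + 1)), S.card = k → ∀ z : ℂ, z ≠ 0 →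
        (1 / 4 : ℝ) * laplacianR (w S) z
          = (∑ i ∈ S.filter (fun i => i - 1 ∉ S),
              Real.exp (w S z - w (insert (i - 1) (S.erase i)) z))
            - ∑ i ∈ S.filter (fun i => i + 1 ∉ S),
              Real.exp (w (insert (i + 1) (S.erase i)) z - w S z))
    (hI : ∀ S : Finset (ZMod (n + 1)), S.card = k → ∀ z : ℂ, z ≠ 0 →
        w S z + w (S.image fun i => -1 - i) z = 0)
    (hII : ∀ (S T : Finset (ZMod (n + 1))) (i j : ZMod (n + 1)),
        S.card = k → T.card = k → i ∈ S → j ∈ T → S.erase i = T.erase j →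
        ∀ z : ℂ, z ≠ 0 → w S z = w T z + v i j z) :
    (∀ i : ZMod (n + 1), ∀ z : ℂ, z ≠ 0 →
        todaComponent n v i z + todaComponent n v (-1 - i) z = 0)
    ∧ (∀ i : ZMod (n + 1), ∀ z : ℂ, z ≠ 0 →
        (1 / 4 : ℝ) * laplacianR (todaComponent n v i) z
          = Real.exp (todaComponent n v i z - todaComponent n v (i - 1) z)
            - Real.exp (todaComponent n v (i + 1) z - todaComponent n v i z)) := by
  classical
  have hzmem : ∀ z : ℂ, z ≠ 0 → {(0:ℂ)}ᶜ ∈ nhds z := fun z hz =>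
    isOpen_compl_singleton.mem_nhds (by simpa using hz)
  have hC2 : ∀ S : Finset (ZMod (n+1)), S.card = k → ∀ z : ℂ, z ≠ 0 →
      ContDiffAt ℝ 2 (w S) z :=
    fun S hS z hz => (hsm S hS).contDiffAt (hzmem z hz)
  -- basic move lemma
  have hswap : ∀ (S : Finset (ZMod (n+1))) (i j : ZMod (n+1)), S.card = k → i ∈ S → j ∉ S →
      ∀ z : ℂ, z ≠ 0 → w S z - w (insert j (S.erase i)) z = v i j z := by
    intro S i j hS hi hj z hz
    have hj' : j ∉ S.erase i := fun h => hj (Finset.mem_of_mem_erase h)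
    have hT : (insert j (S.erase i)).card = k := by
      rw [Finset.card_insert_of_notMem hj', Finset.card_erase_of_mem hi, hS]
      omega
    have := hII S (insert j (S.erase i)) i j hS hT hi (Finset.mem_insert_self _ _)
      (Finset.erase_insert hj').symm z hz
    linarith
  have hvzero : ∀ (a : ZMod (n+1)) (z : ℂ), z ≠ 0 → v a a z = 0 := by
    intro a z hz
    have hS := itv_card n k (by omega) a
    have := hII (itv n k a) (itv n k a) a a hS hS (a_mem_itv n k hk1 a) (a_mem_itv n k hk1 a)
      rfl z hz
    linarith
  have hIIR : ∀ (R : Finset (ZMod (n+1))) (a b : ZMod (n+1)), R.card = k - 1 → a ∉ R → b ∉ R →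
      ∀ z : ℂ, z ≠ 0 → w (insert a R) z = w (insert b R) z + v a b z := by
    intro R a b hR ha hb z hz
    have hca : (insert a R).card = k := by rw [Finset.card_insert_of_notMem ha, hR]; omega
    have hcb : (insert b R).card = k := by rw [Finset.card_insert_of_notMem hb, hR]; omega
    exact hII _ _ a b hca hcb (Finset.mem_insert_self _ _) (Finset.mem_insert_self _ _)
      (by rw [Finset.erase_insert ha, Finset.erase_insert hb]) z hz
  have hRpair : ∀ a b : ZMod (n+1), a ≠ b → ∃ R : Finset (ZMod (n+1)),
      R.card = k - 1 ∧ a ∉ R ∧ b ∉ R := by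
    intro a b hab
    have hcard : k - 1 ≤ (({a, b} : Finset (ZMod (n+1)))ᶜ).card := by
      rw [Finset.card_compl, Finset.card_pair hab, ZMod.card]
      omega
    obtain ⟨R, hRsub, hRcard⟩ := Finset.exists_subset_card_eq hcard
    refine ⟨R, hRcard, fun h => ?_, fun h => ?_⟩
    · have := hRsub h; simp at this
    · have := hRsub h; simp at this
  have hanti : ∀ (a b : ZMod (n+1)) (z : ℂ), z ≠ 0 → v a b z + v b a z = 0 := by
    intro a b z hz
    by_cases hab : a = b
    · subst hab; have := hvzero a z hz; linarith
    · obtain ⟨R, hR, ha, hb⟩ := hRpair a b hab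
      have h1 := hIIR R a b hR ha hb z hz
      have h2 := hIIR R b a hR hb ha z hz
      linarith
  have hcoc : ∀ (a b c : ZMod (n+1)) (z : ℂ), z ≠ 0 → v a c z = v a b z + v b c z := by
    intro a b c z hz
    by_cases hab : a = b
    · subst hab; have := hvzero a z hz; linarith
    by_cases hbc : b = c
    · subst hbc; have := hvzero b z hz; linarith
    by_cases hac : a = c
    · subst hac
      have h1 := hanti a b z hz
      have h2 := hvzero a z hz
      linarith
    by_cases hkn : k = n
    · have hcompl : ∀ x y : ZMod (n+1), x ≠ y →
          w (Finset.univ.erase y) z = w (Finset.univ.erase x) z + v x y z := by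
        intro x y hxy
        have hcx : (Finset.univ.erase y).card = k := by
          rw [Finset.card_erase_of_mem (Finset.mem_univ _), Finset.card_univ, ZMod.card]
          omega
        have hcy : (Finset.univ.erase x).card = k := by
          rw [Finset.card_erase_of_mem (Finset.mem_univ _), Finset.card_univ, ZMod.card]
          omega
        refine hII _ _ x y hcx hcy (Finset.mem_erase.mpr ⟨hxy, Finset.mem_univ _⟩)
          (Finset.mem_erase.mpr ⟨hxy.symm, Finset.mem_univ _⟩) ?_ z hz
        ext t
        simp only [Finset.mem_erase, Finset.mem_univ, and_true]
        tauto
      have h1 := hcompl a b hab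
      have h2 := hcompl b c hbc
      have h3 := hcompl a c hac
      linarith
    · have hcard : k - 1 ≤ (({a, b, c} : Finset (ZMod (n+1)))ᶜ).card := by
        rw [Finset.card_compl, ZMod.card]
        have h3 : ({a, b, c} : Finset (ZMod (n+1))).card ≤ 3 := by
          apply le_trans (Finset.card_insert_le _ _)
          have := Finset.card_insert_le b ({c} : Finset (ZMod (n+1)))
          simp at this ⊢
          omega
        omega
      obtain ⟨R, hRsub, hRcard⟩ := Finset.exists_subset_card_eq hcard
      have ha : a ∉ R := fun h => by have := hRsub h; simp at this
      have hb : b ∉ R := fun h => by have := hRsub h; simp at this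
      have hc : c ∉ R := fun h => by have := hRsub h; simp at this
      have h1 := hIIR R a b hRcard ha hb z hz
      have h2 := hIIR R b c hRcard hb hc z hz
      have h3 := hIIR R a c hRcard ha hc z hz
      linarith
  have hsym : ∀ (a b : ZMod (n+1)) (z : ℂ), z ≠ 0 → v a b z = v (-1-b) (-1-a) z := by
    intro a b z hz
    by_cases hab : a = b
    · subst hab; rw [hvzero a z hz, hvzero _ z hz]
    · obtain ⟨R, hR, ha, hb⟩ := hRpair a b hab
      have h1 := hIIR R a b hR ha hb z hz
      have hν : Function.Injective (fun x : ZMod (n+1) => -1 - x) := by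
        intro x y h
        dsimp at h
        linear_combination -h
      have hSc : (insert a R).card = k := by rw [Finset.card_insert_of_notMem ha, hR]; omega
      have hTc : (insert b R).card = k := by rw [Finset.card_insert_of_notMem hb, hR]; omega
      have hIS := hI (insert a R) hSc z hz
      have hIT := hI (insert b R) hTc z hz
      have hera : (((insert a R).image (fun i => -1 - i)).erase (-1-a))
          = R.image (fun i => -1 - i) := by
        rw [← Finset.image_erase hν, Finset.erase_insert ha]
      have herb : (((insert b R).image (fun i => -1 - i)).erase (-1-b))
          = R.image (fun i => -1 - i) := by
        rw [← Finset.image_erase hν, Finset.erase_insert hb]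
      have h2 := hII ((insert a R).image (fun i => -1 - i)) ((insert b R).image (fun i => -1 - i))
        (-1-a) (-1-b)
        (by rw [Finset.card_image_of_injective _ hν, hSc])
        (by rw [Finset.card_image_of_injective _ hν, hTc])
        (Finset.mem_image_of_mem _ (Finset.mem_insert_self a R))
        (Finset.mem_image_of_mem _ (Finset.mem_insert_self b R))
        (by rw [hera, herb]) z hz
      have h3 := hanti a b z hz
      have h4 := hanti (-1-a) (-1-b) z hz
      linarith
  have hstep : ∀ (i : ZMod (n+1)) (z : ℂ), z ≠ 0 →
      v (i+1) i z = todaComponent n v (i+1) z - todaComponent n v i z := by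
    intro i z hz
    have h1 := hcoc (i+1) i (-2-i) z hz
    have h2 := hcoc i (-1-i) (-2-i) z hz
    have h3 := hsym (i+1) i z hz
    have e2 : (-1 - (i+1) : ZMod (n+1)) = -2 - i := by ring
    rw [e2] at h3
    simp only [todaComponent]
    rw [e2]
    have h4 := hanti i (i+1) z hz
    linarith
  constructor
  · intro i z hz
    simp only [todaComponent]
    have e : (-1 - (-1 - i) : ZMod (n+1)) = i := by ring
    rw [e]
    have := hanti i (-1-i) z hz
    linarith
  · -- the Toda equation
    -- helper: in/out boundary moves
    have hin : ∀ (S : Finset (ZMod (n+1))) (i : ZMod (n+1)), S.card = k → i ∈ S → i - 1 ∉ S →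
        ∀ z : ℂ, z ≠ 0 → w S z - w (insert (i-1) (S.erase i)) z = v i (i-1) z :=
      fun S i hS hi hni z hz => hswap S i (i-1) hS hi hni z hz
    have hout : ∀ (S : Finset (ZMod (n+1))) (i : ZMod (n+1)), S.card = k → i ∈ S → i + 1 ∉ S →
        ∀ z : ℂ, z ≠ 0 → w (insert (i+1) (S.erase i)) z - w S z = v (i+1) i z := by
      intro S i hS hi hni z hz
      have h1 := hswap S i (i+1) hS hi hni z hz
      have h2 := hanti i (i+1) z hz
      linarith
    have e2 : ∀ a : ZMod (n+1), a + ((k-1 : ℕ) : ZMod (n+1)) = a + (k : ℕ) - 1 := by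
      intro a
      rw [Nat.cast_sub hk1]
      push_cast
      ring
    -- (Gr) evaluated on an interval
    have hA : ∀ (a : ZMod (n+1)) (z : ℂ), z ≠ 0 →
        (1/4 : ℝ) * laplacianR (w (itv n k a)) z
          = Real.exp (v a (a-1) z)
            - Real.exp (v (a + (k:ℕ)) (a + (k:ℕ) - 1) z) := by
      intro a z hz
      have hS := itv_card n k (by omega) a
      have h := hGr (itv n k a) hS z hz
      rw [filter_left n k hk1 hk2 a, filter_right n k hk1 hk2 a, Finset.sum_singleton,
        Finset.sum_singleton] at h
      have t1 : w (itv n k a) z - w (insert (a-1) ((itv n k a).erase a)) z = v a (a-1) z :=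
        hin _ a hS (a_mem_itv n k hk1 a) (a_sub_one_not_mem n k hk2 a) z hz
      have t2 : w (insert (a + ((k-1:ℕ) : ZMod (n+1)) + 1)
            ((itv n k a).erase (a + ((k-1:ℕ) : ZMod (n+1))))) z - w (itv n k a) z
          = v (a + ((k-1:ℕ) : ZMod (n+1)) + 1) (a + ((k-1:ℕ) : ZMod (n+1))) z :=
        hout _ _ hS (top_mem_itv n k hk1 a)
          (by rw [top_add_one n k hk1 a]; exact a_add_k_not_mem n k hk2 a) z hz
      rw [t1, t2, top_add_one n k hk1 a, e2 a] at h
      exact h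
    -- (Gr) evaluated on the once-shifted interval `Jset`
    have hB : ∀ (a : ZMod (n+1)) (z : ℂ), z ≠ 0 →
        (1/4 : ℝ) * laplacianR (w (Jset n k a)) z
          = Real.exp (v a (a-1) z) + Real.exp (v (a + (k:ℕ)) (a + (k:ℕ) - 1) z)
            - Real.exp (v (a + (k:ℕ) - 1) (a + (k:ℕ) - 1 - 1) z)
            - Real.exp (v (a + (k:ℕ) + 1) (a + (k:ℕ)) z) := by
      intro a z hz
      by_cases hk1' : k = 1
      · subst hk1'
        have h := hA (a+1) z hz
        rw [← Jset_k1 n a] at h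
        have g1 : (a + ((1:ℕ) : ZMod (n+1)) : ZMod (n+1)) = a + 1 := by push_cast; ring
        rw [g1]
        have g2 : (a + 1 + ((1:ℕ) : ZMod (n+1)) : ZMod (n+1)) = a + 1 + 1 := by push_cast; ring
        rw [g2] at h
        have g3 : (a + 1 - 1 : ZMod (n+1)) = a := by ring
        have g4 : (a + 1 + 1 - 1 : ZMod (n+1)) = a + 1 := by ring
        rw [g3, g4] at h
        rw [g3]
        linarith
      by_cases hkn : k = n
      · subst hkn
        have gk0 : ((k:ℕ) : ZMod (k+1)) + 1 = 0 := by
          have := ZMod.natCast_self (k+1)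
          push_cast at this
          linear_combination this
        have gka : a + ((k:ℕ) : ZMod (k+1)) = a - 1 := by linear_combination gk0
        have gna : a + ((k:ℕ) : ZMod (k+1)) + 1 = a := by linear_combination gk0
        have gb : a + ((k-1:ℕ) : ZMod (k+1)) = a - 1 - 1 := by rw [e2 a, gka]
        have hU : Jset k k a = Finset.univ.erase (a + ((k-1:ℕ) : ZMod (k+1))) :=
          Jset_kn k hn a
        have hUc : (Finset.univ.erase (a + ((k-1:ℕ) : ZMod (k+1)))).card = k := by
          rw [Finset.card_erase_of_mem (Finset.mem_univ _), Finset.card_univ, ZMod.card]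
          omega
        have h := hGr (Finset.univ.erase (a + ((k-1:ℕ) : ZMod (k+1)))) hUc z hz
        rw [filterU_left k hn _, filterU_right k hn _, Finset.sum_singleton,
          Finset.sum_singleton] at h
        have hb1ne : a + ((k-1:ℕ) : ZMod (k+1)) + 1 ≠ a + ((k-1:ℕ) : ZMod (k+1)) := by
          intro hcon
          exact one_ne_zero_zmod k hn (by linear_combination hcon)
        have hbm1ne : a + ((k-1:ℕ) : ZMod (k+1)) - 1 ≠ a + ((k-1:ℕ) : ZMod (k+1)) := by
          intro hcon
          exact one_ne_zero_zmod k hn (by linear_combination -hcon)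
        have t1 : w (Finset.univ.erase (a + ((k-1:ℕ) : ZMod (k+1)))) z
              - w (insert (a + ((k-1:ℕ) : ZMod (k+1)) + 1 - 1)
                  ((Finset.univ.erase (a + ((k-1:ℕ) : ZMod (k+1)))).erase
                    (a + ((k-1:ℕ) : ZMod (k+1)) + 1))) z
            = v (a + ((k-1:ℕ) : ZMod (k+1)) + 1) (a + ((k-1:ℕ) : ZMod (k+1)) + 1 - 1) z := by
          refine hin _ _ hUc (Finset.mem_erase.mpr ⟨hb1ne, Finset.mem_univ _⟩) ?_ z hz
          have hgb : a + ((k-1:ℕ) : ZMod (k+1)) + 1 - 1 = a + ((k-1:ℕ) : ZMod (k+1)) := by ring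
          rw [hgb]
          simp
        have t2 : w (insert (a + ((k-1:ℕ) : ZMod (k+1)) - 1 + 1)
                ((Finset.univ.erase (a + ((k-1:ℕ) : ZMod (k+1)))).erase
                  (a + ((k-1:ℕ) : ZMod (k+1)) - 1))) z
              - w (Finset.univ.erase (a + ((k-1:ℕ) : ZMod (k+1)))) z
            = v (a + ((k-1:ℕ) : ZMod (k+1)) - 1 + 1) (a + ((k-1:ℕ) : ZMod (k+1)) - 1) z := by
          refine hout _ _ hUc (Finset.mem_erase.mpr ⟨hbm1ne, Finset.mem_univ _⟩) ?_ z hz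
          have hgb : a + ((k-1:ℕ) : ZMod (k+1)) - 1 + 1 = a + ((k-1:ℕ) : ZMod (k+1)) := by ring
          rw [hgb]
          simp
        rw [t1, t2] at h
        rw [gb] at h
        have gb3 : (a - 1 - 1 + 1 : ZMod (k+1)) = a - 1 := by ring
        rw [gb3] at h
        have gb5 : (a - 1 - 1 - 1 + 1 : ZMod (k+1)) = a - 1 - 1 := by ring
        rw [gb5] at h
        rw [hU, gb, gna, gka]
        linarith
      · -- middle case 2 ≤ k ≤ n-1
        have hk2' : 2 ≤ k := by omega
        have hkn' : k + 1 ≤ n := by omega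
        have hJc := Jset_card n k hk1 hk2 a
        have h := hGr (Jset n k a) hJc z hz
        rw [filterJ_left n k hk2' hkn' a, filterJ_right n k hk2' hkn' a] at h
        have hne1 : a ≠ a + ((k:ℕ) : ZMod (n+1)) := by
          intro hcon
          have : a + ((0:ℕ) : ZMod (n+1)) = a + ((k:ℕ) : ZMod (n+1)) := by
            push_cast
            linear_combination hcon
          have := add_cast_inj n (by omega) (by omega) this
          omega
        have hne2 : a + ((k-2:ℕ) : ZMod (n+1)) ≠ a + ((k:ℕ) : ZMod (n+1)) := by
          intro hcon
          have := add_cast_inj n (m := k-2) (by omega) (by omega) hcon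
          omega
        rw [Finset.sum_pair hne1, Finset.sum_pair hne2] at h
        -- four boundary terms
        have t1 : w (Jset n k a) z - w (insert (a-1) ((Jset n k a).erase a)) z
            = v a (a-1) z :=
          hin _ a hJc (a_mem_Jset n k hk2' hk2 a) (asub1_not_mem_Jset n k hk1 hkn' a) z hz
        have t2 : w (Jset n k a) z
              - w (insert (a + ((k:ℕ) : ZMod (n+1)) - 1)
                  ((Jset n k a).erase (a + ((k:ℕ) : ZMod (n+1))))) z
            = v (a + ((k:ℕ) : ZMod (n+1))) (a + ((k:ℕ) : ZMod (n+1)) - 1) z := by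
          refine hin _ _ hJc (top_mem_Jset n k hk1 hk2 a) ?_ z hz
          rw [← e2 a]
          exact b_not_mem_Jset n k hk1 hk2 a
        have t3 : w (insert (a + ((k-2:ℕ) : ZMod (n+1)) + 1)
                ((Jset n k a).erase (a + ((k-2:ℕ) : ZMod (n+1))))) z
              - w (Jset n k a) z
            = v (a + ((k-2:ℕ) : ZMod (n+1)) + 1) (a + ((k-2:ℕ) : ZMod (n+1))) z := by
          refine hout _ _ hJc (k2_mem_Jset n k hk2' hk2 a) ?_ z hz
          have he : a + ((k-2 : ℕ) : ZMod (n+1)) + 1 = a + ((k-1 : ℕ) : ZMod (n+1)) := by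
            have h3 : k - 1 = (k-2) + 1 := by omega
            rw [h3]
            push_cast
            ring
          rw [he]
          exact b_not_mem_Jset n k hk1 hk2 a
        have t4 : w (insert (a + ((k:ℕ) : ZMod (n+1)) + 1)
                ((Jset n k a).erase (a + ((k:ℕ) : ZMod (n+1))))) z
              - w (Jset n k a) z
            = v (a + ((k:ℕ) : ZMod (n+1)) + 1) (a + ((k:ℕ) : ZMod (n+1))) z := by
          refine hout _ _ hJc (top_mem_Jset n k hk1 hk2 a) ?_ z hz
          have he : a + ((k : ℕ) : ZMod (n+1)) + 1 = a + ((k+1 : ℕ) : ZMod (n+1)) := by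
            push_cast
            ring
          rw [he]
          exact k1_not_mem_Jset n k hk1 hkn' a
        rw [t1, t2, t3, t4] at h
        have e3 : a + ((k-2:ℕ) : ZMod (n+1)) + 1 = a + ((k:ℕ) : ZMod (n+1)) - 1 := by
          have hc2 : ((k-2:ℕ) : ZMod (n+1)) = ((k:ℕ) : ZMod (n+1)) - 2 := by
            rw [Nat.cast_sub hk2']
            push_cast
            ring
          rw [hc2]
          ring
        have e4 : a + ((k-2:ℕ) : ZMod (n+1)) = a + ((k:ℕ) : ZMod (n+1)) - 1 - 1 := by
          have hc2 : ((k-2:ℕ) : ZMod (n+1)) = ((k:ℕ) : ZMod (n+1)) - 2 := by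
            rw [Nat.cast_sub hk2']
            push_cast
            ring
          rw [hc2]
          ring
        rw [e3, e4] at h
        linarith
    -- pointwise identity between `Jset` and `itv` values
    have hJI : ∀ (a : ZMod (n+1)) (z : ℂ), z ≠ 0 →
        w (Jset n k a) z - w (itv n k a) z
          = v (a + (k:ℕ)) (a + (k:ℕ) - 1) z := by
      intro a z hz
      have h1 := hswap (itv n k a) (a + ((k-1:ℕ) : ZMod (n+1))) (a + ((k:ℕ) : ZMod (n+1)))
        (itv_card n k (by omega) a) (top_mem_itv n k hk1 a) (a_add_k_not_mem n k hk2 a) z hz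
      have h2 := hanti (a + ((k-1:ℕ) : ZMod (n+1))) (a + ((k:ℕ) : ZMod (n+1))) z hz
      have h3 := hcoc (a + ((k:ℕ) : ZMod (n+1))) (a + ((k:ℕ) : ZMod (n+1)))
        (a + ((k:ℕ) : ZMod (n+1)) - 1) z hz
      rw [Jset, ← e2 a]
      linarith [hvzero (a + ((k:ℕ) : ZMod (n+1))) z hz]
    -- telescoping chain for v
    have hchain : ∀ (m : ℕ) (c : ZMod (n+1)) (z : ℂ), z ≠ 0 →
        v (c + (m:ℕ)) c z
          = ∑ t ∈ Finset.range m, v (c + (t:ℕ) + 1) (c + (t:ℕ)) z := by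
      intro m
      induction m with
      | zero => intro c z hz; simpa using hvzero c z hz
      | succ m ih =>
          intro c z hz
          rw [Finset.sum_range_succ, ← ih c z hz]
          have h := hcoc (c + ((m+1:ℕ) : ZMod (n+1))) (c + ((m:ℕ) : ZMod (n+1))) c z hz
          have e : (c + ((m+1:ℕ) : ZMod (n+1))) = c + ((m:ℕ) : ZMod (n+1)) + 1 := by
            push_cast
            ring
          rw [e] at h
          rw [e, h]
          ring
    -- main computation
    intro i z hz
    set c : ZMod (n+1) := -1 - i with hc
    set m : ℕ := (i - c).val with hm
    have hcm : c + ((m : ℕ) : ZMod (n+1)) = i := by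
      have h0 : ((m : ℕ) : ZMod (n+1)) = i - c := by
        rw [hm, ZMod.natCast_val, ZMod.cast_id]
      rw [h0]
      ring
    set A : ℕ → ZMod (n+1) := fun t => c + (t:ℕ) + 1 - (k:ℕ) with hAdef
    have hAk : ∀ t : ℕ, A t + ((k:ℕ) : ZMod (n+1)) = c + (t:ℕ) + 1 := by
      intro t
      rw [hAdef]
      ring
    have hAk1 : ∀ t : ℕ, A t + ((k:ℕ) : ZMod (n+1)) - 1 = c + (t:ℕ) := by
      intro t
      rw [hAdef]
      ring
    set F : ℕ → ℂ → ℝ := fun t ζ => w (Jset n k (A t)) ζ - w (itv n k (A t)) ζ with hF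
    set Φ : ℂ → ℝ := fun ζ => (1/2 : ℝ) * ∑ t ∈ Finset.range m, F t ζ with hΦ
    have hagree : ∀ ζ : ℂ, ζ ≠ 0 → todaComponent n v i ζ = Φ ζ := by
      intro ζ hζ
      have h2 : v i (-1 - i) ζ = v (c + ((m:ℕ) : ZMod (n+1))) c ζ := by rw [hcm, ← hc]
      have h3 : ∑ t ∈ Finset.range m, v (c + (t:ℕ) + 1) (c + (t:ℕ)) ζ
          = ∑ t ∈ Finset.range m, F t ζ := by
        refine Finset.sum_congr rfl fun t _ => ?_
        have h4 := hJI (A t) ζ hζ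
        rw [hAk1 t, hAk t] at h4
        simp only [hF]
        linarith
      simp only [todaComponent, hΦ]
      rw [h2, hchain m c ζ hζ, h3]
      ring
    have hev : todaComponent n v i =ᶠ[nhds z] Φ := by
      filter_upwards [hzmem z hz] with ζ hζ
      exact hagree ζ (by simpa using hζ)
    have hC2t : ∀ t : ℕ, t < m → ContDiffAt ℝ 2 (F t) z := by
      intro t _
      simp only [hF]
      exact (hC2 _ (Jset_card n k hk1 hk2 (A t)) z hz).sub
        (hC2 _ (itv_card n k (by omega) (A t)) z hz)
    have hsumC2 : ContDiffAt ℝ 2 (fun ζ => ∑ t ∈ Finset.range m, F t ζ) z := by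
      apply ContDiffAt.sum
      intro t ht
      exact hC2t t (Finset.mem_range.mp ht)
    have hlap1 : laplacianR (todaComponent n v i) z = laplacianR Φ z := lap_congr hev
    have hlap2 : laplacianR Φ z
        = (1/2 : ℝ) * ∑ t ∈ Finset.range m, laplacianR (F t) z := by
      rw [hΦ]
      rw [lap_const_mul (1/2 : ℝ) hsumC2, lap_sum m F hC2t]
    have hlapF : ∀ t : ℕ, t < m → laplacianR (F t) z
        = laplacianR (w (Jset n k (A t))) z - laplacianR (w (itv n k (A t))) z := by
      intro t _
      simp only [hF]
      exact lap_sub (hC2 _ (Jset_card n k hk1 hk2 (A t)) z hz)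
        (hC2 _ (itv_card n k (by omega) (A t)) z hz)
    set f : ℕ → ℝ := fun t => Real.exp (v (c + (t:ℕ)) (c + (t:ℕ) - 1) z) with hf
    have key : ∀ t : ℕ, t < m →
        (1/4 : ℝ) * laplacianR (F t) z = (f (t+1) - f t) - (f (t+1+1) - f (t+1)) := by
      intro t ht
      have hBt := hB (A t) z hz
      have hAt := hA (A t) z hz
      rw [hAk1 t, hAk t] at hBt hAt
      have c1 : (c + ((t+1:ℕ) : ZMod (n+1))) = c + ((t:ℕ) : ZMod (n+1)) + 1 := by
        push_cast
        ring
      have c2 : (c + ((t+1+1:ℕ) : ZMod (n+1))) = c + ((t:ℕ) : ZMod (n+1)) + 1 + 1 := by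
        push_cast
        ring
      rw [hlapF t ht]
      simp only [hf]
      rw [c1, c2]
      have c3 : c + ((t:ℕ) : ZMod (n+1)) + 1 + 1 - 1 = c + ((t:ℕ) : ZMod (n+1)) + 1 := by ring
      have c4 : c + ((t:ℕ) : ZMod (n+1)) + 1 - 1 = c + ((t:ℕ) : ZMod (n+1)) := by ring
      rw [c3, c4]
      linarith
    have total : ∑ t ∈ Finset.range m, ((1/4 : ℝ) * laplacianR (F t) z)
        = (f m - f 0) - (f (m+1) - f (0+1)) := by
      have hs : ∑ t ∈ Finset.range m, ((1/4 : ℝ) * laplacianR (F t) z)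
          = ∑ t ∈ Finset.range m, ((f (t+1) - f t) - (f (t+1+1) - f (t+1))) :=
        Finset.sum_congr rfl fun t ht => key t (Finset.mem_range.mp ht)
      rw [hs, Finset.sum_sub_distrib, Finset.sum_range_sub f m,
        Finset.sum_range_sub (fun t => f (t+1)) m]
    -- values of f at the ends
    have s1 : v i (i-1) z = v (-i) (-1-i) z := by
      have h := hsym i (i-1) z hz
      have e : (-1 - (i-1) : ZMod (n+1)) = -i := by ring
      rw [e] at h
      exact h
    have s2 : v (i+1) i z = v (-1-i) (-2-i) z := by
      have h := hsym (i+1) i z hz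
      have e : (-1 - (i+1) : ZMod (n+1)) = -2 - i := by ring
      rw [e] at h
      exact h
    have fm : f m = Real.exp (v i (i-1) z) := by
      simp only [hf]
      rw [hcm]
    have fm1 : f (m+1) = Real.exp (v (i+1) i z) := by
      simp only [hf]
      have e : (c + ((m+1:ℕ) : ZMod (n+1))) = c + ((m:ℕ) : ZMod (n+1)) + 1 := by
        push_cast
        ring
      rw [e, hcm]
      have e1 : (i + 1 - 1 : ZMod (n+1)) = i := by ring
      rw [e1]
    have f0 : f 0 = Real.exp (v (i+1) i z) := by
      simp only [hf]
      have e : (c + ((0:ℕ) : ZMod (n+1))) = c := by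
        push_cast
        ring
      rw [e, s2, hc]
      have e1 : (-1 - i - 1 : ZMod (n+1)) = -2 - i := by ring
      rw [e1]
    have f1 : f (0+1) = Real.exp (v i (i-1) z) := by
      simp only [hf]
      have e : (c + ((0+1:ℕ) : ZMod (n+1))) = -i := by
        rw [hc]
        push_cast
        ring
      rw [e, s1]
      have e1 : (-i - 1 : ZMod (n+1)) = -1 - i := by ring
      rw [e1]
    -- final assembly
    have r1 : todaComponent n v i z - todaComponent n v (i-1) z = v i (i-1) z := by
      have h := hstep (i-1) z hz
      have e : (i - 1 + 1 : ZMod (n+1)) = i := by ring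
      rw [e] at h
      linarith
    have r2 : todaComponent n v (i+1) z - todaComponent n v i z = v (i+1) i z := by
      have h := hstep i z hz
      linarith
    rw [r1, r2, hlap1, hlap2]
    have hsum4 : ∑ t ∈ Finset.range m, ((1/4 : ℝ) * laplacianR (F t) z)
        = (1/4 : ℝ) * ∑ t ∈ Finset.range m, laplacianR (F t) z := by
      rw [Finset.mul_sum]
    rw [fm, f0, fm1, f1] at total
    rw [hsum4] at total
    linarith
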